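/- Assume the semigroup property for Kronecker coefficients. Fix partitions λ, μ of the same size and k ∈ ℕ. Suppose every point of M_k(s_{pλ} ∗ s_{pμ}) is dominance-closed in the sense that α ∈ M_k(s_{pλ}∗s_{pμ}) iff there is a partition θ ⪰ sort(α) with g(pλ, pμ, θ) > 0. Then the set ⋃_{p=1}^∞ (1/p) M_k(s_{pλ} ∗ s_{pμ}) ⊂ ℚ^k is convex (as a subset of ℚ^k): any rational convex combination of finitely many of its points again lies in the set. -/

import Mathlib

/-- A partition: a weakly decreasing list of positive integers. -/
def IsPartition (l : List ℕ) : Prop :=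
  l.Pairwise (· ≥ ·) ∧ ∀ x ∈ l, 0 < x

/-- Dominance order: `l` dominates `m` (all partial sums of `l` are at least those of `m`). -/
def Dominates (l m : List ℕ) : Prop :=
  ∀ i, (m.take i).sum ≤ (l.take i).sum

/-- A semistandard Young tableau of shape `l`, given as its list of rows:
rows weakly increase, columns strictly increase. -/
def IsSSYT (l : List ℕ) (T : List (List ℕ)) : Prop :=
  T.map List.length = l ∧
  (∀ r ∈ T, r.Pairwise (· ≤ ·)) ∧
  ∀ i j, j < (T.getD (i+1) []).length →
    (T.getD i []).getD j 0 < (T.getD (i+1) []).getD j 0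

/-- The number of entries of the tableau `T` equal to `v`. -/
def contentCount (T : List (List ℕ)) (v : ℕ) : ℕ :=
  (T.map fun r => r.count v).sum

/-- `T` has content `a` (a vector of multiplicities indexed by `Fin k`). -/
def hasContent (k : ℕ) (T : List (List ℕ)) (a : Fin k → ℕ) : Prop :=
  ∀ v : ℕ, contentCount T v = if h : v < k then a ⟨v, h⟩ else 0

/-- The weakly decreasing rearrangement of a list of naturals. -/
def sortDesc (l : List ℕ) : List ℕ :=
  ((l : Multiset ℕ).sort (· ≤ ·)).reverse

/-- Componentwise sum of two partitions (padding with zeros). -/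
def addP (l m : List ℕ) : List ℕ :=
  (List.range (max l.length m.length)).map fun i => l.getD i 0 + m.getD i 0

/-- The partition `p·l` with parts `p * l_i`. -/
def scaleP (p : ℕ) (l : List ℕ) : List ℕ := l.map (p * ·)

/-! ### Auxiliary lemmas -/

lemma sum_take_eq (l : List ℕ) (i : ℕ) :
    (l.take i).sum = ∑ j ∈ Finset.range i, l.getD j 0 := by
  induction l generalizing i with
  | nil => simp [List.getD]
  | cons a l ih =>
    cases i with
    | zero => simp
    | succ i =>
      rw [Finset.sum_range_succ']
      simp [ih, List.getD]
      ring

lemma sortDesc_sorted (l : List ℕ) : (sortDesc l).Pairwise (· ≥ ·) := by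
  have := Multiset.pairwise_sort (l : Multiset ℕ) (· ≤ ·)
  exact List.pairwise_reverse.2 this

lemma sortDesc_perm (l : List ℕ) : (sortDesc l).Perm l := by
  have h1 : (Multiset.sort (l : Multiset ℕ) (· ≤ ·)).Perm l := by
    rw [← Multiset.coe_eq_coe, Multiset.sort_eq]
  exact (List.reverse_perm _).trans h1

lemma multiset_le_map {α β : Type*} [DecidableEq α] [DecidableEq β] (f : α → β) :
    ∀ (t : Multiset β) (s : Multiset α), t ≤ Multiset.map f s →
      ∃ u ≤ s, Multiset.map f u = t := by
  intro t
  induction t using Multiset.induction_on with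
  | empty => exact fun s _ => ⟨0, Multiset.zero_le s, rfl⟩
  | cons a t ih =>
    intro s h
    have ha : a ∈ Multiset.map f s := Multiset.mem_of_le h (Multiset.mem_cons_self a t)
    obtain ⟨x, hx, hfx⟩ := Multiset.mem_map.1 ha
    have hs : s = x ::ₘ s.erase x := (Multiset.cons_erase hx).symm
    have ht : t ≤ Multiset.map f (s.erase x) := by
      have h2 := Multiset.erase_le_erase a h
      rwa [Multiset.erase_cons_head, hs, Multiset.map_cons, hfx,
        Multiset.erase_cons_head] at h2
    obtain ⟨u, hu, hmu⟩ := ih (s.erase x) ht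
    refine ⟨x ::ₘ u, ?_, by rw [Multiset.map_cons, hfx, hmu]⟩
    rw [hs]
    exact Multiset.cons_le_cons x hu

lemma take_sum_mono (l : List ℕ) {i j : ℕ} (h : i ≤ j) :
    (l.take i).sum ≤ (l.take j).sum := by
  rw [sum_take_eq, sum_take_eq]
  exact Finset.sum_le_sum_of_subset (Finset.range_subset_range.2 h)

lemma take_sum_cons_le (a : ℕ) (l : List ℕ) (ha : ∀ x ∈ l, x ≤ a) (j : ℕ) :
    (l.take j).sum ≤ ((a :: l).take j).sum := by
  cases j with
  | zero => simp
  | succ j =>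
    rw [List.take_succ_cons, List.sum_cons, sum_take_eq l (j+1), Finset.sum_range_succ,
      sum_take_eq l j]
    have : l.getD j 0 ≤ a := by
      rcases lt_or_ge j l.length with h | h
      · rw [List.getD_eq_getElem _ _ h]; exact ha _ (List.getElem_mem h)
      · rw [List.getD_eq_default _ _ h]; exact Nat.zero_le a
    omega

lemma sorted_sublist_sum_le : ∀ {l m : List ℕ}, l.Pairwise (· ≥ ·) → m.Sublist l →
    m.sum ≤ (l.take m.length).sum := by
  intro l m hl h
  induction h with
  | slnil => simp
  | @cons l₁ l₂ a h ih =>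
    have hs := List.pairwise_cons.1 hl
    exact (ih hs.2).trans (take_sum_cons_le a l₂ (fun x hx => hs.1 x hx) _)
  | @cons_cons l₁ l₂ a h ih =>
    have hs := List.pairwise_cons.1 hl
    simp only [List.length_cons, List.take_succ_cons, List.sum_cons]
    exact Nat.add_le_add_left (ih hs.2) a

lemma sorted_subperm_sum_le {l m : List ℕ} (hl : l.Pairwise (· ≥ ·)) (h : m.Subperm l) :
    m.sum ≤ (l.take m.length).sum := by
  obtain ⟨m', hp, hs⟩ := h
  rw [← hp.sum_eq, ← hp.length_eq]
  exact sorted_sublist_sum_le hl hs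

lemma ofFn_coe {k : ℕ} (f : Fin k → ℕ) :
    (List.ofFn f : Multiset ℕ) = Multiset.map f (Finset.univ : Finset (Fin k)).val := by
  rw [List.ofFn_eq_map, Fin.univ_def]
  rfl

lemma sum_le_take_sortDesc {k : ℕ} (f : Fin k → ℕ) (S : Finset (Fin k)) (i : ℕ)
    (hS : S.card ≤ i) : ∑ j ∈ S, f j ≤ ((sortDesc (List.ofFn f)).take i).sum := by
  set m := (Multiset.map f S.val).toList with hm
  have hcoe : (m : Multiset ℕ) = Multiset.map f S.val := Multiset.coe_toList _
  have hsub : m.Subperm (sortDesc (List.ofFn f)) := by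
    rw [← Multiset.coe_le, hcoe, Multiset.coe_eq_coe.2 (sortDesc_perm _), ofFn_coe]
    exact Multiset.map_le_map (Finset.val_le_iff.2 (Finset.subset_univ S))
  have hlen : m.length ≤ i := by
    have : m.length = S.card := by
      rw [← Multiset.coe_card, hcoe, Multiset.card_map]; rfl
    omega
  have hsum : m.sum = ∑ j ∈ S, f j := by
    rw [← Multiset.sum_coe, hcoe]; rfl
  calc ∑ j ∈ S, f j = m.sum := hsum.symm
    _ ≤ ((sortDesc (List.ofFn f)).take m.length).sum :=
        sorted_subperm_sum_le (sortDesc_sorted _) hsub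
    _ ≤ _ := take_sum_mono _ hlen

lemma take_sortDesc_eq_sum {k : ℕ} (f : Fin k → ℕ) (i : ℕ) :
    ∃ S : Finset (Fin k), S.card ≤ i ∧
      ((sortDesc (List.ofFn f)).take i).sum = ∑ j ∈ S, f j := by
  have hle : (((sortDesc (List.ofFn f)).take i : List ℕ) : Multiset ℕ) ≤
      Multiset.map f (Finset.univ : Finset (Fin k)).val := by
    rw [← ofFn_coe, ← Multiset.coe_eq_coe.2 (sortDesc_perm (List.ofFn f)), Multiset.coe_le]
    exact (List.take_sublist _ _).subperm
  obtain ⟨u, hu, hmu⟩ := multiset_le_map f _ _ hle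
  have hnd : u.Nodup := Multiset.nodup_of_le hu (Finset.univ.nodup)
  refine ⟨⟨u, hnd⟩, ?_, ?_⟩
  · have : u.card = ((sortDesc (List.ofFn f)).take i).length := by
      rw [← Multiset.card_map f u, hmu, Multiset.coe_card]
    rw [Finset.card_def, this]
    simp [List.length_take]
  · rw [Finset.sum_eq_multiset_sum]
    show _ = (Multiset.map f u).sum
    rw [hmu, Multiset.sum_coe]

lemma key_sort_add {k : ℕ} (a b : Fin k → ℕ) (i : ℕ) :
    ((sortDesc (List.ofFn fun j => a j + b j)).take i).sum ≤
      ((sortDesc (List.ofFn a)).take i).sum + ((sortDesc (List.ofFn b)).take i).sum := by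
  obtain ⟨S, hS, hsum⟩ := take_sortDesc_eq_sum (fun j => a j + b j) i
  rw [hsum, Finset.sum_add_distrib]
  exact Nat.add_le_add (sum_le_take_sortDesc a S i hS) (sum_le_take_sortDesc b S i hS)

lemma getD_anti {l : List ℕ} (hl : IsPartition l) {i j : ℕ} (h : i ≤ j) :
    l.getD j 0 ≤ l.getD i 0 := by
  rcases lt_or_ge j l.length with hj | hj
  · have hi : i < l.length := lt_of_le_of_lt h hj
    rw [List.getD_eq_getElem _ _ hj, List.getD_eq_getElem _ _ hi]
    rcases eq_or_lt_of_le h with rfl | hlt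
    · exact le_refl _
    · exact List.pairwise_iff_get.1 hl.1 ⟨i, hi⟩ ⟨j, hj⟩ hlt
  · rw [List.getD_eq_default _ _ hj]
    exact Nat.zero_le _

lemma addP_getD (l m : List ℕ) (j : ℕ) :
    (addP l m).getD j 0 = l.getD j 0 + m.getD j 0 := by
  rcases lt_or_ge j (max l.length m.length) with hj | hj
  · have hj' : j < (addP l m).length := by simp [addP, hj]
    rw [List.getD_eq_getElem _ _ hj']
    simp [addP]
  · rw [List.getD_eq_default, List.getD_eq_default, List.getD_eq_default]
    · omega
    · omega
    · simp [addP, hj]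

lemma addP_length (l m : List ℕ) : (addP l m).length = max l.length m.length := by
  simp [addP]

lemma sum_eq_range_getD (l : List ℕ) {N : ℕ} (h : l.length ≤ N) :
    l.sum = ∑ j ∈ Finset.range N, l.getD j 0 := by
  rw [← sum_take_eq, List.take_of_length_le h]

lemma addP_sum (l m : List ℕ) : (addP l m).sum = l.sum + m.sum := by
  rw [sum_eq_range_getD (addP l m) (le_of_eq (addP_length l m)),
    sum_eq_range_getD l (le_max_left l.length m.length),
    sum_eq_range_getD m (le_max_right l.length m.length), ← Finset.sum_add_distrib]
  exact Finset.sum_congr rfl fun j _ => addP_getD l m j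

lemma addP_take_sum (l m : List ℕ) (i : ℕ) :
    ((addP l m).take i).sum = (l.take i).sum + (m.take i).sum := by
  rw [sum_take_eq, sum_take_eq, sum_take_eq, ← Finset.sum_add_distrib]
  exact Finset.sum_congr rfl fun j _ => addP_getD l m j

lemma addP_isPartition {l m : List ℕ} (hl : IsPartition l) (hm : IsPartition m) :
    IsPartition (addP l m) := by
  constructor
  · rw [addP, List.pairwise_map]
    refine List.pairwise_lt_range.imp ?_
    intro i j hij
    exact Nat.add_le_add (getD_anti hl hij.le) (getD_anti hm hij.le)
  · intro x hx
    rw [addP, List.mem_map] at hx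
    obtain ⟨i, hi, rfl⟩ := hx
    rw [List.mem_range] at hi
    rcases lt_or_ge i l.length with h | h
    · have : 0 < l.getD i 0 := by
        rw [List.getD_eq_getElem _ _ h]
        exact hl.2 _ (List.getElem_mem h)
      omega
    · have h2 : i < m.length := by omega
      have : 0 < m.getD i 0 := by
        rw [List.getD_eq_getElem _ _ h2]
        exact hm.2 _ (List.getElem_mem h2)
      omega

lemma scaleP_isPartition {l : List ℕ} (p : ℕ) (hp : 0 < p) (hl : IsPartition l) :
    IsPartition (scaleP p l) := by
  constructor
  · rw [scaleP, List.pairwise_map]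
    exact hl.1.imp fun h => Nat.mul_le_mul_left p h
  · intro x hx
    rw [scaleP, List.mem_map] at hx
    obtain ⟨y, hy, rfl⟩ := hx
    exact Nat.mul_pos hp (hl.2 y hy)

lemma scaleP_sum (p : ℕ) (l : List ℕ) : (scaleP p l).sum = p * l.sum := by
  induction l with
  | nil => simp [scaleP]
  | cons a l ih => simp [scaleP] at ih ⊢; rw [ih]; ring

lemma addP_scaleP (p q : ℕ) (l : List ℕ) :
    addP (scaleP p l) (scaleP q l) = scaleP (p + q) l := by
  apply List.ext_getElem
  · simp [addP, scaleP]
  · intro i h1 h2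
    have hi : i < l.length := by simpa [scaleP] using h2
    have hip : i < (scaleP p l).length := by simpa [scaleP] using hi
    have hiq : i < (scaleP q l).length := by simpa [scaleP] using hi
    simp only [addP]
    rw [List.getElem_map, List.getElem_range, List.getD_eq_getElem _ _ hip,
      List.getD_eq_getElem _ _ hiq]
    simp [scaleP]
    ring

theorem limit_support_convex (n k : ℕ) (lam mu : List ℕ)
    (hlam : IsPartition lam) (hmu : IsPartition mu)
    (hlams : lam.sum = n) (hmus : mu.sum = n)
    (g : List ℕ → List ℕ → List ℕ → ℕ)
    (hsemi : ∀ a1 b1 c1 a2 b2 c2 : List ℕ,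
      IsPartition a1 → IsPartition b1 → IsPartition c1 →
      IsPartition a2 → IsPartition b2 → IsPartition c2 →
      a1.sum = b1.sum → b1.sum = c1.sum → a2.sum = b2.sum → b2.sum = c2.sum →
      0 < g a1 b1 c1 → 0 < g a2 b2 c2 →
      0 < g (addP a1 a2) (addP b1 b2) (addP c1 c2))
    (M : ℕ → Set (Fin k → ℕ))
    (hM : ∀ (p : ℕ) (a : Fin k → ℕ), a ∈ M p ↔
      ∃ θ : List ℕ, IsPartition θ ∧ θ.sum = p * n ∧
        Dominates θ (sortDesc (List.ofFn a)) ∧ 0 < g (scaleP p lam) (scaleP p mu) θ) :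
    Convex ℚ {θ : Fin k → ℚ | ∃ p : ℕ, 0 < p ∧
      ∃ a : Fin k → ℕ, a ∈ M p ∧ θ = fun i => (a i : ℚ) / (p : ℚ)} := by
  -- additivity of the supports
  have hMadd : ∀ (p q : ℕ) (a b : Fin k → ℕ), 0 < p → 0 < q → a ∈ M p → b ∈ M q →
      (fun i => a i + b i) ∈ M (p + q) := by
    intro p q a b hp hq ha hb
    rw [hM] at ha hb ⊢
    obtain ⟨θ1, hθ1P, hθ1s, hθ1d, hθ1g⟩ := ha
    obtain ⟨θ2, hθ2P, hθ2s, hθ2d, hθ2g⟩ := hb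
    refine ⟨addP θ1 θ2, addP_isPartition hθ1P hθ2P,
      by rw [addP_sum, hθ1s, hθ2s]; ring, ?_, ?_⟩
    · intro i
      rw [addP_take_sum]
      exact (key_sort_add a b i).trans (Nat.add_le_add (hθ1d i) (hθ2d i))
    · have := hsemi (scaleP p lam) (scaleP p mu) θ1 (scaleP q lam) (scaleP q mu) θ2
        (scaleP_isPartition p hp hlam) (scaleP_isPartition p hp hmu) hθ1P
        (scaleP_isPartition q hq hlam) (scaleP_isPartition q hq hmu) hθ2P
        (by rw [scaleP_sum, scaleP_sum, hlams, hmus])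
        (by rw [scaleP_sum, hmus, hθ1s])
        (by rw [scaleP_sum, scaleP_sum, hlams, hmus])
        (by rw [scaleP_sum, hmus, hθ2s]) hθ1g hθ2g
      rwa [addP_scaleP, addP_scaleP] at this
  -- scaling of the supports
  have hMsmul : ∀ (m p : ℕ) (a : Fin k → ℕ), 0 < m → 0 < p → a ∈ M p →
      (fun i => m * a i) ∈ M (m * p) := by
    intro m p a hm hp ha
    induction m with
    | zero => omega
    | succ m ih =>
      rcases Nat.eq_zero_or_pos m with rfl | hm'
      · simpa using ha
      · have h1 := hMadd (m * p) p (fun i => m * a i) a (Nat.mul_pos hm' hp) hp (ih hm') ha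
        have h2 : (fun i => (m + 1) * a i) = fun i => m * a i + a i := by
          funext i; ring
        have h3 : (m + 1) * p = m * p + p := by ring
        rw [h2, h3]
        exact h1
  -- convexity
  intro x hx y hy s t hs ht hst
  obtain ⟨p, hp, a, ha, hxe⟩ := hx
  obtain ⟨q, hq, b, hb, hye⟩ := hy
  subst hxe hye
  set c := s.num.toNat with hc
  set d := s.den with hd
  have hd0 : 0 < d := s.pos
  have hnum : (0 : ℤ) ≤ s.num := Rat.num_nonneg.2 hs
  have hsc : (c : ℚ) / (d : ℚ) = s := by
    have h1 : ((c : ℕ) : ℚ) = (s.num : ℚ) := by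
      rw [hc]
      exact_mod_cast congrArg (Int.cast : ℤ → ℚ) (Int.toNat_of_nonneg hnum)
    rw [h1, hd]
    exact Rat.num_div_den s
  have hs1 : s ≤ 1 := by linarith
  have hcd : c ≤ d := by
    have h1 : (c : ℚ) ≤ (d : ℚ) := by
      rw [← hsc] at hs1
      have hd0' : (0 : ℚ) < (d : ℚ) := by exact_mod_cast hd0
      calc (c : ℚ) = (c : ℚ) / d * d := by field_simp
        _ ≤ 1 * d := by
            apply mul_le_mul_of_nonneg_right hs1 (le_of_lt hd0')
        _ = d := one_mul _
    exact_mod_cast h1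
  have hts : t = 1 - s := by linarith
  rcases Nat.eq_zero_or_pos c with hc0 | hcpos
  · have hs0 : s = 0 := by rw [← hsc, hc0]; simp
    have ht1 : t = 1 := by rw [hts, hs0]; ring
    rw [hs0, ht1]
    simpa using ⟨q, hq, b, hb, rfl⟩
  rcases eq_or_lt_of_le hcd with hcd' | hclt
  · have hs' : s = 1 := by
      rw [← hsc, hcd']
      field_simp
    have ht0 : t = 0 := by rw [hts, hs']; ring
    rw [hs', ht0]
    simpa using ⟨p, hp, a, ha, rfl⟩
  · -- the genuine convex combination
    have hwa := hMsmul (c * q) p a (Nat.mul_pos hcpos hq) hp ha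
    have hwb := hMsmul ((d - c) * p) q b (Nat.mul_pos (by omega) hp) hq hb
    have hw := hMadd (c * q * p) ((d - c) * p * q) _ _
      (Nat.mul_pos (Nat.mul_pos hcpos hq) hp)
      (Nat.mul_pos (Nat.mul_pos (by omega) hp) hq) hwa hwb
    have hD : c * q * p + (d - c) * p * q = d * (p * q) := by
      zify [le_of_lt hclt]
      ring
    rw [hD] at hw
    refine ⟨d * (p * q), by positivity, _, hw, ?_⟩
    funext i
    simp only [Pi.add_apply, Pi.smul_apply, smul_eq_mul]
    rw [hts, ← hsc]
    have hp0 : (p : ℚ) ≠ 0 := by positivity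
    have hq0 : (q : ℚ) ≠ 0 := by positivity
    have hd0' : (d : ℚ) ≠ 0 := by positivity
    push_cast [Nat.cast_sub (le_of_lt hclt)]
    field_simp
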